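/- Let μ be three times continuously differentiable on [0,1], non-negative, not identically zero, with μ(1) ≠ 0. Then the kernel k(s) = ∫₀¹ (s^{−α}/Γ(1−α)) μ(α) dα satisfies k(s) ∼ s^{−1}(log s)^{−2} μ(1) as s → 0⁺, i.e. lim_{s→0⁺} s (log s)² k(s) = μ(1). -/

import Mathlib

open MeasureTheory Filter Set
open Topology

/-- The kernel `k(s) = ∫₀¹ s^{-α}/Γ(1-α) · μ(α) dα`. -/
noncomputable def kker (μ : ℝ → ℝ) (s : ℝ) : ℝ :=
  ∫ α in (0:ℝ)..1, s ^ (-α) / Real.Gamma (1 - α) * μ α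


lemma hasDeriv_F (L : ℝ) (hL : 0 < L) (t : ℝ) :
    HasDerivAt (fun t : ℝ => -((t * L + 1) / L ^ 2) * Real.exp (-(t * L)))
      (t * Real.exp (-(t * L))) t := by
  have h1 : HasDerivAt (fun t : ℝ => -((t * L + 1) / L ^ 2)) (-(L / L ^ 2)) t := by
    have : HasDerivAt (fun t : ℝ => t * L + 1) L t := by
      simpa using ((hasDerivAt_id t).mul_const L).add_const 1
    exact (this.div_const (L ^ 2)).neg
  have h2 : HasDerivAt (fun t : ℝ => Real.exp (-(t * L))) (Real.exp (-(t * L)) * (-L)) t := by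
    have : HasDerivAt (fun t : ℝ => -(t * L)) (-L) t := by
      have h := ((hasDerivAt_id t).mul_const L).neg
      simp only [one_mul] at h
      exact h
    exact (Real.hasDerivAt_exp _).comp t this
  have := h1.mul h2
  refine this.congr_deriv ?_
  have hL0 : L ≠ 0 := hL.ne'
  field_simp
  ring

lemma integral_te (L : ℝ) (hL : 0 < L) (a b : ℝ) :
    ∫ t in a..b, t * Real.exp (-(t * L)) =
      (-((b * L + 1) / L ^ 2) * Real.exp (-(b * L))) -
      (-((a * L + 1) / L ^ 2) * Real.exp (-(a * L))) := by
  refine intervalIntegral.integral_eq_sub_of_hasDerivAt (fun t _ => hasDeriv_F L hL t) ?_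
  apply Continuous.intervalIntegrable
  continuity

lemma laplace_main (G : ℝ → ℝ) (hG : ContinuousOn G (Icc 0 1)) :
    Tendsto (fun L : ℝ => L ^ 2 * ∫ t in (0:ℝ)..1, t * Real.exp (-(t * L)) * G t)
      atTop (𝓝 (G 0)) := by
  obtain ⟨M, hM⟩ := isCompact_Icc.exists_bound_of_continuousOn hG
  have hM0 : 0 ≤ M := le_trans (norm_nonneg _) (hM 0 ⟨le_refl _, zero_le_one⟩)
  rw [Metric.tendsto_nhds]
  intro ε hε
  have hc : ContinuousWithinAt G (Icc 0 1) 0 := hG 0 ⟨le_refl _, zero_le_one⟩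
  rw [Metric.continuousWithinAt_iff] at hc
  obtain ⟨δ0, hδ0, hδ0'⟩ := hc (ε / 4) (by linarith)
  set δ : ℝ := min (δ0 / 2) 1 with hδdef
  have hδpos : 0 < δ := lt_min (by linarith) one_pos
  have hδ1 : δ ≤ 1 := min_le_right _ _
  have hGsmall : ∀ t ∈ Icc (0:ℝ) δ, |G t - G 0| ≤ ε / 4 := by
    intro t ht
    have ht1 : t ∈ Icc (0:ℝ) 1 := ⟨ht.1, le_trans ht.2 hδ1⟩
    have hd : dist t 0 < δ0 := by
      rw [Real.dist_eq, sub_zero, abs_of_nonneg ht.1]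
      calc t ≤ δ := ht.2
        _ ≤ δ0 / 2 := min_le_left _ _
        _ < δ0 := by linarith
    have := hδ0' ht1 hd
    rw [Real.dist_eq] at this
    linarith
  have t1 : Tendsto (fun L : ℝ => L ^ 2 * Real.exp (-(δ * L))) atTop (𝓝 0) := by
    have hcomp : Tendsto (fun L : ℝ => (δ * L) ^ 2 * Real.exp (-(δ * L))) atTop (𝓝 0) :=
      (Real.tendsto_pow_mul_exp_neg_atTop_nhds_zero 2).comp
        (tendsto_id.const_mul_atTop hδpos)
    have h2 := hcomp.const_mul (1 / δ ^ 2)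
    rw [mul_zero] at h2
    refine h2.congr fun L => ?_
    field_simp
  have t2 : Tendsto (fun L : ℝ => (L + 1) * Real.exp (-L)) atTop (𝓝 0) := by
    have h1 : Tendsto (fun L : ℝ => L ^ 1 * Real.exp (-L)) atTop (𝓝 0) :=
      Real.tendsto_pow_mul_exp_neg_atTop_nhds_zero 1
    have h2 : Tendsto (fun L : ℝ => Real.exp (-L)) atTop (𝓝 0) := by
      simpa using Real.tendsto_exp_comp_nhds_zero.mpr tendsto_neg_atTop_atBot
    have h3 := h1.add h2
    rw [add_zero] at h3
    refine h3.congr fun L => ?_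
    ring
  have herr : ∀ᶠ L in atTop, 2 * M * (L ^ 2 * Real.exp (-(δ * L)))
      + |G 0| * ((L + 1) * Real.exp (-L)) < ε / 2 := by
    have terr := (t1.const_mul (2 * M)).add (t2.const_mul |G 0|)
    simp only [mul_zero, add_zero] at terr
    exact terr.eventually (eventually_lt_nhds (show (0:ℝ) < ε / 2 by linarith))
  filter_upwards [eventually_gt_atTop (0:ℝ), herr] with L hL hLerr
  have hL2 : (0:ℝ) < L ^ 2 := by positivity
  have hGint : ∀ a b : ℝ, a ∈ Icc (0:ℝ) 1 → b ∈ Icc (0:ℝ) 1 →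
      IntervalIntegrable (fun t => t * Real.exp (-(t * L)) * (G t - G 0)) volume a b := by
    intro a b ha hb
    apply ContinuousOn.intervalIntegrable
    exact ((continuous_id.mul (Real.continuous_exp.comp
      ((continuous_id.mul continuous_const).neg))).continuousOn).mul
      ((hG.mono (uIcc_subset_Icc ha hb)).sub continuousOn_const)
  have hteint : ∀ a b : ℝ, IntervalIntegrable (fun t => t * Real.exp (-(t * L))) volume a b := by
    intro a b
    exact (continuous_id.mul (Real.continuous_exp.comp
      ((continuous_id.mul continuous_const).neg))).intervalIntegrable a b
  have hLne : L ≠ 0 := ne_of_gt hL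
  have hI01 : L ^ 2 * ∫ t in (0:ℝ)..1, t * Real.exp (-(t * L))
      = 1 - (L + 1) * Real.exp (-L) := by
    rw [integral_te L hL]
    simp only [one_mul, zero_mul, neg_zero, Real.exp_zero, mul_one]
    field_simp
    ring
  have hsplit : ∫ t in (0:ℝ)..1, t * Real.exp (-(t * L)) * G t
      = (∫ t in (0:ℝ)..1, t * Real.exp (-(t * L)) * (G t - G 0))
        + G 0 * ∫ t in (0:ℝ)..1, t * Real.exp (-(t * L)) := by
    rw [← intervalIntegral.integral_const_mul, ← intervalIntegral.integral_add
      (hGint 0 1 ⟨le_refl _, zero_le_one⟩ ⟨zero_le_one, le_refl _⟩)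
      ((hteint 0 1).const_mul _)]
    exact intervalIntegral.integral_congr fun t _ => by ring
  set J : ℝ := ∫ t in (0:ℝ)..1, t * Real.exp (-(t * L)) * (G t - G 0) with hJ
  have hJsplit : J = (∫ t in (0:ℝ)..δ, t * Real.exp (-(t * L)) * (G t - G 0))
      + ∫ t in δ..1, t * Real.exp (-(t * L)) * (G t - G 0) := by
    rw [hJ, ← intervalIntegral.integral_add_adjacent_intervals
      (hGint 0 δ ⟨le_refl _, zero_le_one⟩ ⟨le_of_lt hδpos, hδ1⟩)
      (hGint δ 1 ⟨le_of_lt hδpos, hδ1⟩ ⟨zero_le_one, le_refl _⟩)]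
  have hJ1 : |∫ t in (0:ℝ)..δ, t * Real.exp (-(t * L)) * (G t - G 0)| ≤ ε / 4 / L ^ 2 := by
    have hb : |∫ t in (0:ℝ)..δ, t * Real.exp (-(t * L)) * (G t - G 0)|
        ≤ |∫ t in (0:ℝ)..δ, ε / 4 * (t * Real.exp (-(t * L)))| := by
      rw [← Real.norm_eq_abs (∫ t in (0:ℝ)..δ, t * Real.exp (-(t * L)) * (G t - G 0))]
      apply intervalIntegral.norm_integral_le_abs_of_norm_le
      · filter_upwards [ae_restrict_mem measurableSet_uIoc] with t ht
        rw [uIoc_of_le hδpos.le] at ht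
        have ht' : t ∈ Icc (0:ℝ) δ := Ioc_subset_Icc_self ht
        have h1 : 0 ≤ t := ht'.1
        have h2 : (0:ℝ) < Real.exp (-(t * L)) := Real.exp_pos _
        rw [Real.norm_eq_abs, abs_mul, abs_mul, abs_of_nonneg h1, abs_of_pos h2]
        calc t * Real.exp (-(t * L)) * |G t - G 0|
            ≤ t * Real.exp (-(t * L)) * (ε / 4) :=
              mul_le_mul_of_nonneg_left (hGsmall t ht') (by positivity)
          _ = ε / 4 * (t * Real.exp (-(t * L))) := by ring
      · exact (hteint 0 δ).const_mul _
    refine hb.trans ?_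
    rw [intervalIntegral.integral_const_mul, integral_te L hL]
    simp only [zero_mul, neg_zero, Real.exp_zero, mul_one, zero_add, sub_neg_eq_add]
    have hid : Real.exp (-(δ * L)) * Real.exp (δ * L) = 1 := by
      rw [← Real.exp_add]; simp
    have hkey : (δ * L + 1) * Real.exp (-(δ * L)) ≤ 1 := by
      nlinarith [Real.add_one_le_exp (δ * L), Real.exp_pos (δ * L), Real.exp_pos (-(δ * L))]
    have h0X : 0 ≤ -((δ * L + 1) / L ^ 2) * Real.exp (-(δ * L)) + 1 / L ^ 2 := by
      have heq : -((δ * L + 1) / L ^ 2) * Real.exp (-(δ * L)) + 1 / L ^ 2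
          = (1 - (δ * L + 1) * Real.exp (-(δ * L))) / L ^ 2 := by ring
      rw [heq]
      exact div_nonneg (by linarith) hL2.le
    have hXle : -((δ * L + 1) / L ^ 2) * Real.exp (-(δ * L)) + 1 / L ^ 2 ≤ 1 / L ^ 2 := by
      have h4 : 0 ≤ (δ * L + 1) / L ^ 2 * Real.exp (-(δ * L)) := by positivity
      linarith
    rw [abs_of_nonneg (mul_nonneg (by linarith) h0X)]
    calc ε / 4 * (-((δ * L + 1) / L ^ 2) * Real.exp (-(δ * L)) + 1 / L ^ 2)
        ≤ ε / 4 * (1 / L ^ 2) := mul_le_mul_of_nonneg_left hXle (by linarith)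
      _ = ε / 4 / L ^ 2 := by ring
  have hJ2 : |∫ t in δ..1, t * Real.exp (-(t * L)) * (G t - G 0)|
      ≤ 2 * M * Real.exp (-(δ * L)) := by
    have hb := intervalIntegral.norm_integral_le_of_norm_le_const
      (f := fun t => t * Real.exp (-(t * L)) * (G t - G 0))
      (a := δ) (b := 1) (C := 2 * M * Real.exp (-(δ * L))) ?_
    · rw [Real.norm_eq_abs] at hb
      refine hb.trans ?_
      have : |1 - δ| ≤ 1 := by rw [abs_of_nonneg (by linarith)]; linarith
      calc 2 * M * Real.exp (-(δ * L)) * |1 - δ|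
          ≤ 2 * M * Real.exp (-(δ * L)) * 1 :=
            mul_le_mul_of_nonneg_left this (by positivity)
        _ = 2 * M * Real.exp (-(δ * L)) := by ring
    · intro x hx
      rw [uIoc_of_le hδ1] at hx
      have hx1 : x ∈ Icc (0:ℝ) 1 := ⟨le_of_lt (lt_of_le_of_lt hδpos.le hx.1), hx.2⟩
      have hxe : Real.exp (-(x * L)) ≤ Real.exp (-(δ * L)) := by
        apply Real.exp_le_exp.mpr
        have : δ * L ≤ x * L := mul_le_mul_of_nonneg_right hx.1.le hL.le
        linarith
      have hGx : |G x - G 0| ≤ 2 * M := by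
        have h1 := hM x hx1
        have h2 := hM 0 ⟨le_refl _, zero_le_one⟩
        rw [Real.norm_eq_abs] at h1 h2
        calc |G x - G 0| ≤ |G x| + |G 0| := abs_sub _ _
          _ ≤ 2 * M := by linarith
      rw [Real.norm_eq_abs, abs_mul, abs_mul, abs_of_nonneg hx1.1,
        abs_of_pos (Real.exp_pos _)]
      calc x * Real.exp (-(x * L)) * |G x - G 0|
          ≤ 1 * Real.exp (-(δ * L)) * (2 * M) := by
            apply mul_le_mul _ hGx (abs_nonneg _) (by positivity)
            exact mul_le_mul hx1.2 hxe (Real.exp_pos _).le zero_le_one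
        _ = 2 * M * Real.exp (-(δ * L)) := by ring
  have hJb : |J| ≤ ε / 4 / L ^ 2 + 2 * M * Real.exp (-(δ * L)) := by
    rw [hJsplit]
    exact (abs_add_le _ _).trans (add_le_add hJ1 hJ2)
  set E : ℝ := (L + 1) * Real.exp (-L) with hE
  have hE0 : 0 ≤ E := by positivity
  rw [Real.dist_eq, hsplit]
  have heq : L ^ 2 * (J + G 0 * ∫ t in (0:ℝ)..1, t * Real.exp (-(t * L))) - G 0
      = L ^ 2 * J - G 0 * E := by
    linear_combination G 0 * hI01
  rw [heq]
  calc |L ^ 2 * J - G 0 * E| ≤ |L ^ 2 * J| + |G 0 * E| := abs_sub _ _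
    _ = L ^ 2 * |J| + |G 0| * E := by
        rw [abs_mul, abs_mul, abs_of_pos hL2, abs_of_nonneg hE0]
    _ ≤ L ^ 2 * (ε / 4 / L ^ 2 + 2 * M * Real.exp (-(δ * L))) + |G 0| * E :=
        add_le_add_left (mul_le_mul_of_nonneg_left hJb hL2.le) _
    _ = ε / 4 + (2 * M * (L ^ 2 * Real.exp (-(δ * L))) + |G 0| * E) := by
        field_simp
        ring
    _ < ε := by linarith

theorem kker_asymp_at_zero (μ : ℝ → ℝ)
    (hC3 : ContDiffOn ℝ 3 μ (Set.Icc 0 1))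
    (hnn : ∀ α ∈ Set.Icc (0:ℝ) 1, 0 ≤ μ α)
    (hne : ∃ α ∈ Set.Icc (0:ℝ) 1, μ α ≠ 0)
    (h1 : μ 1 ≠ 0) :
    Tendsto (fun s : ℝ => s * (Real.log s) ^ 2 * kker μ s)
      (nhdsWithin 0 (Set.Ioi 0)) (nhds (μ 1)) := by
  set G : ℝ → ℝ := fun t => μ (1 - t) / Real.Gamma (t + 1) with hGdef
  have hμc : ContinuousOn μ (Icc 0 1) := hC3.continuousOn
  have hGc : ContinuousOn G (Icc 0 1) := by
    apply ContinuousOn.div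
    · apply hμc.comp (continuous_const.sub continuous_id).continuousOn
      intro t ht
      exact ⟨by simpa using ht.2, by simpa using ht.1⟩
    · intro t ht
      apply ContinuousAt.continuousWithinAt
      have hne' : ∀ m : ℕ, t + 1 ≠ -(m:ℝ) := by
        intro m
        have hpos : (0:ℝ) < t + 1 := by linarith [ht.1]
        have h2 : -(m:ℝ) ≤ 0 := neg_nonpos.mpr (Nat.cast_nonneg m)
        exact (lt_of_le_of_lt h2 hpos).ne'
      have hca : ContinuousAt Real.Gamma (t + 1) :=
        (Real.differentiableAt_Gamma hne').continuousAt
      exact ContinuousAt.comp (x := t) (f := fun u : ℝ => u + 1) hca (continuousAt_id.add continuousAt_const)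
    · intro t ht
      exact (Real.Gamma_pos_of_pos (by linarith [ht.1])).ne'
  have hG0 : G 0 = μ 1 := by simp [hGdef, Real.Gamma_one]
  have hmain := laplace_main G hGc
  rw [hG0] at hmain
  have hlog : Tendsto (fun s : ℝ => -Real.log s) (𝓝[>] (0:ℝ)) atTop :=
    tendsto_neg_atBot_atTop.comp Real.tendsto_log_nhdsGT_zero
  refine (hmain.comp hlog).congr' ?_
  filter_upwards [self_mem_nhdsWithin] with s hs
  have hs : (0:ℝ) < s := hs
  set c := Real.log s with hc
  have hs' : s = Real.exp c := (Real.exp_log hs).symm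
  show (-c) ^ 2 * ∫ t in (0:ℝ)..1, t * Real.exp (-(t * (-c))) * G t
      = s * c ^ 2 * kker μ s
  have hrpow : kker μ s = ∫ α in (0:ℝ)..1, Real.exp (-(α * c)) / Real.Gamma (1 - α) * μ α := by
    unfold kker
    apply intervalIntegral.integral_congr
    intro α _
    show s ^ (-α) / Real.Gamma (1 - α) * μ α = Real.exp (-(α * c)) / Real.Gamma (1 - α) * μ α
    rw [Real.rpow_def_of_pos hs]
    rw [← hc]
    ring_nf
  have hcv : (∫ α in (0:ℝ)..1, Real.exp (-(α * c)) / Real.Gamma (1 - α) * μ α)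
      = ∫ t in (0:ℝ)..1, Real.exp (-((1 - t) * c)) / Real.Gamma t * μ (1 - t) := by
    have h := intervalIntegral.integral_comp_sub_left (a := (0:ℝ)) (b := 1)
      (fun α => Real.exp (-(α * c)) / Real.Gamma (1 - α) * μ α) 1
    norm_num at h
    exact h.symm
  have point : ∀ t ∈ uIcc (0:ℝ) 1,
      s * c ^ 2 * (Real.exp (-((1 - t) * c)) / Real.Gamma t * μ (1 - t))
      = (-c) ^ 2 * (t * Real.exp (-(t * (-c))) * G t) := by
    intro t ht
    rw [uIcc_of_le zero_le_one] at ht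
    have hexp : s * Real.exp (-((1 - t) * c)) = Real.exp (t * c) := by
      rw [hs', ← Real.exp_add]
      congr 1
      ring
    rcases eq_or_ne t 0 with rfl | ht0
    · simp [Real.Gamma_zero, hGdef]
    · have htpos : 0 < t := lt_of_le_of_ne ht.1 (Ne.symm ht0)
      have hΓ : Real.Gamma (t + 1) = t * Real.Gamma t := Real.Gamma_add_one ht0
      have hΓt : Real.Gamma t ≠ 0 := (Real.Gamma_pos_of_pos htpos).ne'
      simp only [hGdef]
      rw [hΓ]
      field_simp
      linear_combination (norm := ring_nf) (c ^ 2 * μ (1 - t)) * hexp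
  calc (-c) ^ 2 * ∫ t in (0:ℝ)..1, t * Real.exp (-(t * (-c))) * G t
      = ∫ t in (0:ℝ)..1, (-c) ^ 2 * (t * Real.exp (-(t * (-c))) * G t) := by
        rw [intervalIntegral.integral_const_mul]
    _ = ∫ t in (0:ℝ)..1, s * c ^ 2 *
          (Real.exp (-((1 - t) * c)) / Real.Gamma t * μ (1 - t)) := by
        exact (intervalIntegral.integral_congr point).symm
    _ = s * c ^ 2 * kker μ s := by
        rw [intervalIntegral.integral_const_mul, hrpow, hcv]
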